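/- Let G be a connected graph of order n ≥ 2 with no true twin vertices and let H be a graph of order n' ≥ 2 with diameter D(H) ≤ 2. Then dim_s(G∘H) = n·dim_s(H) + n'·dim_s(G) − dim_s(G)·dim_s(H). -/

import Mathlib

open SimpleGraph

namespace Paper

variable {α β : Type*}

/-- The lexicographic product of two simple graphs. -/
def lexProd (G : SimpleGraph α) (H : SimpleGraph β) : SimpleGraph (α × β) where
  Adj p q := G.Adj p.1 q.1 ∨ (p.1 = q.1 ∧ H.Adj p.2 q.2)
  symm := by
    constructor
    rintro ⟨a, b⟩ ⟨c, d⟩ (h | ⟨h1, h2⟩)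
    · exact Or.inl h.symm
    · exact Or.inr ⟨h1.symm, h2.symm⟩
  loopless := by
    constructor
    rintro ⟨a, b⟩ (h | ⟨h1, h2⟩)
    · exact G.loopless.1 a h
    · exact H.loopless.1 b h2

/-- `u` is maximally distant from `v`. -/
def MaxDistant (G : SimpleGraph α) (u v : α) : Prop :=
  ∀ w, G.Adj u w → G.edist v w ≤ G.edist u v

/-- `u` and `v` are mutually maximally distant. -/
def MMD (G : SimpleGraph α) (u v : α) : Prop :=
  MaxDistant G u v ∧ MaxDistant G v u

/-- Two vertices are true twins if they have the same closed neighborhood. -/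
def TrueTwins (G : SimpleGraph α) (u v : α) : Prop :=
  ∀ w, (G.Adj u w ∨ u = w) ↔ (G.Adj v w ∨ v = w)

/-- The boundary of a graph: vertices belonging to some mutually maximally distant pair. -/
def boundary (G : SimpleGraph α) : Set α := {u | ∃ v, u ≠ v ∧ MMD G u v}

/-- The strong resolving graph of `G`, with vertex set the boundary of `G`. -/
def srGraph (G : SimpleGraph α) : SimpleGraph (boundary G) where
  Adj u v := u.1 ≠ v.1 ∧ MMD G u.1 v.1
  symm := ⟨fun u v h => ⟨h.1.symm, h.2.2, h.2.1⟩⟩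
  loopless := ⟨fun u h => h.1 rfl⟩

/-- The graph `G*`: same vertices, `u ~ v` iff `d_G(u,v) ≥ 2` or `u,v` are true twins. -/
def gstar (G : SimpleGraph α) : SimpleGraph α where
  Adj u v := u ≠ v ∧ (2 ≤ G.edist u v ∨ TrueTwins G u v)
  symm := by
    constructor
    rintro u v ⟨h1, (h2 | h2)⟩
    · exact ⟨h1.symm, Or.inl (by rwa [G.edist_comm] at h2)⟩
    · exact ⟨h1.symm, Or.inr fun w => (h2 w).symm⟩
  loopless := ⟨fun u h => h.1 rfl⟩

/-- `G*` with its isolated vertices removed. -/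
def gstarMinus (G : SimpleGraph α) : SimpleGraph {x | ∃ y, (gstar G).Adj x y} :=
  SimpleGraph.induce _ (gstar G)

/-- Disjoint union of two graphs. -/
def disjUnion (G : SimpleGraph α) (H : SimpleGraph β) : SimpleGraph (α ⊕ β) where
  Adj x y := match x, y with
    | Sum.inl a, Sum.inl b => G.Adj a b
    | Sum.inr a, Sum.inr b => H.Adj a b
    | _, _ => False
  symm := by
    constructor
    rintro (a | a) (b | b) h <;> simp_all <;> exact h.symm
  loopless := by
    constructor
    rintro (a | a) h <;> simp_all

/-- `k` disjoint copies of a graph. -/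
def copies (k : ℕ) (G : SimpleGraph α) : SimpleGraph (Fin k × α) where
  Adj p q := p.1 = q.1 ∧ G.Adj p.2 q.2
  symm := ⟨fun p q h => ⟨h.1.symm, h.2.symm⟩⟩
  loopless := ⟨fun p h => G.loopless.1 _ h.2⟩

/-- The join `K₁ + H` of a single vertex with `H`. -/
def joinK1 (H : SimpleGraph β) : SimpleGraph (Unit ⊕ β) where
  Adj x y := match x, y with
    | Sum.inl _, Sum.inl _ => False
    | Sum.inl _, Sum.inr _ => True
    | Sum.inr _, Sum.inl _ => True
    | Sum.inr a, Sum.inr b => H.Adj a b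
  symm := by
    constructor
    rintro (a | a) (b | b) h <;> simp_all <;> exact h.symm
  loopless := by
    constructor
    rintro (a | a) h <;> simp_all

/-- `w` strongly resolves the pair `u, v`. -/
def StronglyResolves (G : SimpleGraph α) (w u v : α) : Prop :=
  G.edist w u = G.edist w v + G.edist v u ∨ G.edist w v = G.edist w u + G.edist u v

/-- A strong metric generator. -/
def IsStrongGenerator (G : SimpleGraph α) (S : Finset α) : Prop :=
  ∀ u v : α, u ≠ v → ∃ w ∈ S, StronglyResolves G w u v

/-- The strong metric dimension. -/
noncomputable def sdim (G : SimpleGraph α) : ℕ :=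
  sInf {k | ∃ S : Finset α, IsStrongGenerator G S ∧ S.card = k}

/-- A vertex cover. -/
def IsVertexCover (G : SimpleGraph α) (S : Finset α) : Prop :=
  ∀ ⦃u v : α⦄, G.Adj u v → u ∈ S ∨ v ∈ S

/-- The vertex cover number `α(G)`. -/
noncomputable def vcNum (G : SimpleGraph α) : ℕ :=
  sInf {k | ∃ S : Finset α, IsVertexCover G S ∧ S.card = k}

/-- The independence number `β(G)`. -/
noncomputable def indepNum (G : SimpleGraph α) : ℕ :=
  sSup {k | ∃ S : Finset α, (∀ u ∈ S, ∀ v ∈ S, ¬ G.Adj u v) ∧ S.card = k}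

section AuxLemmas

open Finset in
theorem sr_self_left (G : SimpleGraph α) (u v : α) : StronglyResolves G u u v := by
  right; rw [edist_self, zero_add]

theorem sr_self_right (G : SimpleGraph α) (u v : α) : StronglyResolves G v u v := by
  left; rw [edist_self, zero_add]

theorem sr_symm {G : SimpleGraph α} {w u v : α} (h : StronglyResolves G w u v) :
    StronglyResolves G w v u := Or.symm h

theorem isStrongGenerator_univ [Fintype α] (G : SimpleGraph α) :
    IsStrongGenerator G Finset.univ := by
  intro u v _
  exact ⟨u, Finset.mem_univ u, sr_self_left G u v⟩

theorem sdim_set_nonempty [Fintype α] (G : SimpleGraph α) :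
    {k | ∃ S : Finset α, IsStrongGenerator G S ∧ S.card = k}.Nonempty :=
  ⟨Finset.univ.card, Finset.univ, isStrongGenerator_univ G, rfl⟩

theorem sdim_le_card [Fintype α] {G : SimpleGraph α} {S : Finset α}
    (hS : IsStrongGenerator G S) : sdim G ≤ S.card :=
  Nat.sInf_le ⟨S, hS, rfl⟩

theorem exists_min_generator [Fintype α] (G : SimpleGraph α) :
    ∃ S : Finset α, IsStrongGenerator G S ∧ S.card = sdim G :=
  Nat.sInf_mem (sdim_set_nonempty G)

theorem sdim_le_fintype_card [Fintype α] (G : SimpleGraph α) :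
    sdim G ≤ Fintype.card α :=
  sdim_le_card (isStrongGenerator_univ G)

end AuxLemmas
section MMDLemmas

variable {G : SimpleGraph α}

theorem exists_maxDistant [Fintype α] (hfin : ∀ u v : α, G.edist u v ≠ ⊤) (v u : α) :
    ∃ u' : α, MaxDistant G u' v ∧ G.edist v u' = G.edist v u + G.edist u u' := by
  classical
  set A : Finset α := Finset.univ.filter (fun x => G.edist v x = G.edist v u + G.edist u x) with hA
  have huA : u ∈ A := by
    simp only [hA, Finset.mem_filter, Finset.mem_univ, true_and]
    rw [SimpleGraph.edist_self, add_zero]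
  obtain ⟨u', hu'A, hmax⟩ := Finset.exists_max_image A (fun x => G.edist v x) ⟨u, huA⟩
  have hu' : G.edist v u' = G.edist v u + G.edist u u' := by
    simpa only [hA, Finset.mem_filter, Finset.mem_univ, true_and] using hu'A
  refine ⟨u', ?_, hu'⟩
  intro w hadj
  by_contra hgt
  push_neg at hgt
  have himp : G.edist v w = G.edist v u + G.edist u w → G.edist v w ≤ G.edist v u' := by
    intro hmem
    exact hmax w (by simp only [hA, Finset.mem_filter, Finset.mem_univ, true_and]; exact hmem)
  have h1 : G.edist v w ≤ G.edist v u' + G.edist u' w := G.edist_triangle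
  have h2 : G.edist u' w = 1 := edist_eq_one_iff_adj.mpr hadj
  have h3 : G.edist v w ≤ G.edist v u + G.edist u w := G.edist_triangle
  have h4 : G.edist u w ≤ G.edist u u' + G.edist u' w := G.edist_triangle
  have h5 : G.edist u' v = G.edist v u' := G.edist_comm
  rw [h5] at hgt
  rw [h2] at h1 h4
  have e1 := hfin v u'
  have e2 := hfin v w
  have e3 := hfin v u
  have e4 := hfin u u'
  have e5 := hfin u w
  lift G.edist v u' to ℕ using e1 with a
  lift G.edist v w to ℕ using e2 with b
  lift G.edist v u to ℕ using e3 with c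
  lift G.edist u u' to ℕ using e4 with d
  lift G.edist u w to ℕ using e5 with e
  norm_cast at h1 h3 h4 hgt hu' himp
  have hbc : b = c + e := by omega
  have := himp hbc
  omega

/-- Core asymmetric lemma: an external vertex cannot strongly resolve a pair
whose second member is maximally distant appropriately. -/
theorem maxDistant_no_ext {u v x : α} (hfin : ∀ u v : α, G.edist u v ≠ ⊤)
    (hmax : MaxDistant G v u) (hxv : x ≠ v)
    (heq : G.edist x u = G.edist x v + G.edist v u) : False := by
  obtain ⟨p, hp⟩ := exists_walk_of_edist_ne_top (hfin v x)
  cases p with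
  | nil => exact hxv rfl
  | @cons _ w₁ _ hadj q =>
    have hq : G.edist w₁ x ≤ q.length := edist_le q
    have hlen : (q.length : ℕ∞) + 1 = G.edist v x := by
      rw [← hp]; push_cast [SimpleGraph.Walk.length_cons]; ring
    have t1 : G.edist x u ≤ G.edist x w₁ + G.edist w₁ u := G.edist_triangle
    have t2 : G.edist u w₁ ≤ G.edist v u := hmax w₁ hadj
    have c1 : G.edist x w₁ = G.edist w₁ x := G.edist_comm
    have c2 : G.edist w₁ u = G.edist u w₁ := G.edist_comm
    have c3 : G.edist x v = G.edist v x := G.edist_comm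
    rw [c1, c2] at t1
    rw [c3, ← hlen] at heq
    have e1 := hfin x u
    have e2 := hfin w₁ x
    have e3 := hfin u w₁
    have e4 := hfin v u
    lift G.edist x u to ℕ using e1 with a
    lift G.edist w₁ x to ℕ using e2 with b
    lift G.edist u w₁ to ℕ using e3 with c
    lift G.edist v u to ℕ using e4 with d
    norm_cast at t1 t2 heq hq
    omega

theorem mmd_no_ext {u v x : α} (hfin : ∀ u v : α, G.edist u v ≠ ⊤)
    (hmmd : MMD G u v) (hxu : x ≠ u) (hxv : x ≠ v)
    (hres : StronglyResolves G x u v) : False := by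
  rcases hres with h | h
  · exact maxDistant_no_ext hfin hmmd.2 hxv h
  · exact maxDistant_no_ext hfin hmmd.1 hxu h

/-- Any set covering all MMD pairs is a strong generator (for a connected graph). -/
theorem cover_isStrongGenerator [Fintype α] (hfin : ∀ u v : α, G.edist u v ≠ ⊤)
    (C : Finset α) (hcov : ∀ u v : α, u ≠ v → MMD G u v → u ∈ C ∨ v ∈ C) :
    IsStrongGenerator G C := by
  intro u v hne
  obtain ⟨u', hu'max, hu'⟩ := exists_maxDistant hfin v u
  obtain ⟨v', hv'max, hv'⟩ := exists_maxDistant hfin u' v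
  -- u' is maximally distant from v'
  have hu'max' : MaxDistant G u' v' := by
    intro w hadj
    have t1 : G.edist v' w ≤ G.edist v' v + G.edist v w := G.edist_triangle
    have t2 : G.edist v w ≤ G.edist u' v := hu'max w hadj
    have c1 : G.edist u' v = G.edist v u' := G.edist_comm
    have heq : G.edist u' v' = G.edist u' v + G.edist v v' := hv'
    have c2 : G.edist v' v = G.edist v v' := G.edist_comm
    calc G.edist v' w ≤ G.edist v v' + G.edist u' v := by rw [c2] at t1; exact t1.trans (by
            exact add_le_add le_rfl t2)
      _ = G.edist u' v' := by rw [heq, add_comm]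
  -- the resolving equations
  have key1 : G.edist u' v = G.edist u' u + G.edist u v := by
    rw [G.edist_comm (u := u') (v := v), G.edist_comm (u := u') (v := u),
      G.edist_comm (u := u) (v := v), add_comm]
    exact hu'
  have key2 : G.edist v' u = G.edist v' v + G.edist v u := by
    have t1 : G.edist u' v' ≤ G.edist u' u + G.edist u v' := G.edist_triangle
    have t2 : G.edist u v' ≤ G.edist u v + G.edist v v' := G.edist_triangle
    have heq : G.edist u' v' = G.edist u' u + (G.edist u v + G.edist v v') := by
      rw [hv', key1]; ring
    have c1 : G.edist v' u = G.edist u v' := G.edist_comm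
    have c2 : G.edist v' v = G.edist v v' := G.edist_comm
    have c3 : G.edist v u = G.edist u v := G.edist_comm
    rw [c1, c2, c3]
    have e1 := hfin u' u
    have e2 := hfin u v'
    have e3 := hfin u v
    have e4 := hfin v v'
    have e5 := hfin u' v'
    lift G.edist u' u to ℕ using e1 with a1
    lift G.edist u v' to ℕ using e2 with a2
    lift G.edist u v to ℕ using e3 with a3
    lift G.edist v v' to ℕ using e4 with a4
    lift G.edist u' v' to ℕ using e5 with a5
    norm_cast at t1 t2 heq ⊢
    omega
  have hne' : u' ≠ v' := by
    intro h
    have h1 : G.edist u' v' = 0 := by rw [h]; exact SimpleGraph.edist_self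
    rw [hv'] at h1
    have h2 : G.edist u' v = 0 := (add_eq_zero.mp h1).1
    have h3 : u' = v := edist_eq_zero_iff.mp h2
    rw [h3, SimpleGraph.edist_self] at hu'
    have h4 : G.edist v u = 0 := (add_eq_zero.mp hu'.symm).1
    exact hne (edist_eq_zero_iff.mp h4).symm
  rcases hcov u' v' hne' ⟨hu'max', hv'max⟩ with hC | hC
  · exact ⟨u', hC, Or.inr key1⟩
  · exact ⟨v', hC, Or.inl key2⟩

end MMDLemmas
section TwinLemma

variable {G : SimpleGraph α}

theorem adj_ext_resolver_core (hfin : ∀ u v : α, G.edist u v ≠ ⊤) {g g' w : α}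
    (hadj : G.Adj g g') (h1 : G.Adj g w) (h2 : ¬ G.Adj g' w) (h3 : g' ≠ w) :
    StronglyResolves G w g g' ∧ w ≠ g ∧ w ≠ g' := by
  have egw : G.edist g w = 1 := edist_eq_one_iff_adj.mpr h1
  have egg' : G.edist g g' = 1 := edist_eq_one_iff_adj.mpr hadj
  have hle : G.edist g' w ≤ 2 := by
    calc G.edist g' w ≤ G.edist g' g + G.edist g w := G.edist_triangle
    _ = 2 := by rw [G.edist_comm (u := g') (v := g), egg', egw]; norm_num
  have hne0 : G.edist g' w ≠ 0 := by rw [ne_eq, edist_eq_zero_iff]; exact h3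
  have hne1 : G.edist g' w ≠ 1 := by rw [ne_eq, edist_eq_one_iff_adj]; exact h2
  have heq : G.edist g' w = 2 := by
    lift G.edist g' w to ℕ using hfin g' w with t
    norm_cast at hle hne0 hne1 ⊢
    omega
  refine ⟨Or.inr ?_, h1.ne', fun h => h3 h.symm⟩
  rw [G.edist_comm (u := w) (v := g'), G.edist_comm (u := w) (v := g), heq, egw, egg']
  norm_num

/-- In a graph without true twins, any adjacent pair has an external strong resolver. -/
theorem adj_ext_resolver (hfin : ∀ u v : α, G.edist u v ≠ ⊤)
    (htw : ∀ u v : α, TrueTwins G u v → u = v) {g g' : α} (hadj : G.Adj g g') :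
    ∃ x : α, x ≠ g ∧ x ≠ g' ∧ StronglyResolves G x g g' := by
  have hntw : ¬ TrueTwins G g g' := fun h => hadj.ne (htw _ _ h)
  rw [TrueTwins, not_forall] at hntw
  obtain ⟨w, hw⟩ := hntw
  by_cases hb : G.Adj g' w ∨ g' = w
  · have ha : ¬ (G.Adj g w ∨ g = w) := fun h => hw (iff_of_true h hb)
    push_neg at ha
    have hb' : G.Adj g' w := by
      rcases hb with h | h
      · exact h
      · subst h; exact absurd hadj ha.1
    obtain ⟨hres, hwg', hwg⟩ := adj_ext_resolver_core hfin hadj.symm hb' ha.1 ha.2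
    exact ⟨w, hwg, hwg', sr_symm hres⟩
  · have ha : G.Adj g w ∨ g = w := by
      by_contra ha
      exact hw (iff_of_false ha hb)
    push_neg at hb
    have ha' : G.Adj g w := by
      rcases ha with h | h
      · exact h
      · subst h; exact absurd hadj.symm hb.1
    obtain ⟨hres, hwg, hwg'⟩ := adj_ext_resolver_core hfin hadj ha' hb.1 hb.2
    exact ⟨w, hwg, hwg', hres⟩

end TwinLemma
section LexDist

variable (G : SimpleGraph α) (H : SimpleGraph β)

/-- Embedding of `H` into a fiber of the lexicographic product. -/
def fiberHom (g : α) : H →g lexProd G H :=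
  ⟨fun b => (g, b), fun a => Or.inr ⟨rfl, a⟩⟩

/-- Embedding of `G` into the lexicographic product at a fixed second coordinate. -/
def baseHom (h' : β) : G →g lexProd G H :=
  ⟨fun a => (a, h'), fun ad => Or.inl ad⟩

theorem lex_edist_fiber_le (g : α) (h h' : β) :
    (lexProd G H).edist (g, h) (g, h') ≤ H.edist h h' := by
  rcases eq_or_ne (H.edist h h') ⊤ with ht | ht
  · rw [ht]; exact le_top
  · obtain ⟨p, hp⟩ := exists_walk_of_edist_ne_top ht
    calc (lexProd G H).edist (g, h) (g, h') ≤ (p.map (fiberHom G H g)).length :=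
          edist_le _
      _ = H.edist h h' := by rw [SimpleGraph.Walk.length_map, hp]

theorem lex_edist_fst_le (p q : α × β) :
    G.edist p.1 q.1 ≤ (lexProd G H).edist p q := by
  rcases eq_or_ne ((lexProd G H).edist p q) ⊤ with ht | ht
  · rw [ht]; exact le_top
  · obtain ⟨w, hw⟩ := exists_walk_of_edist_ne_top ht
    rw [← hw]
    clear hw ht
    induction w with
    | nil => rw [SimpleGraph.edist_self]; exact zero_le
    | @cons x y z hxy w' ih =>
      calc G.edist x.1 z.1 ≤ G.edist x.1 y.1 + G.edist y.1 z.1 := G.edist_triangle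
        _ ≤ 1 + w'.length := by
            refine add_le_add ?_ ih
            rcases hxy with hg | ⟨he, -⟩
            · exact le_of_eq (edist_eq_one_iff_adj.mpr hg)
            · rw [he, SimpleGraph.edist_self]; exact zero_le
        _ = (w'.cons hxy).length := by
            rw [SimpleGraph.Walk.length_cons]; push_cast; ring

theorem lex_edist_fiber {h h' : β} (hH2 : H.edist h h' ≤ 2) (g : α) :
    (lexProd G H).edist (g, h) (g, h') = H.edist h h' := by
  rcases eq_or_ne h h' with rfl | hne
  · rw [SimpleGraph.edist_self, SimpleGraph.edist_self]
  by_cases hadj : H.Adj h h'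
  · rw [edist_eq_one_iff_adj.mpr hadj,
      edist_eq_one_iff_adj.mpr (show (lexProd G H).Adj (g, h) (g, h') from Or.inr ⟨rfl, hadj⟩)]
  · have hH : H.edist h h' = 2 := by
      have h0 : H.edist h h' ≠ 0 := by rw [ne_eq, edist_eq_zero_iff]; exact hne
      have h1 : H.edist h h' ≠ 1 := by rw [ne_eq, edist_eq_one_iff_adj]; exact hadj
      lift H.edist h h' to ℕ using (hH2.trans_lt (ENat.coe_lt_top 2)).ne with t
      norm_cast at hH2 h0 h1 ⊢
      omega
    rw [hH]
    have hle : (lexProd G H).edist (g, h) (g, h') ≤ 2 := by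
      have := lex_edist_fiber_le G H g h h'
      rwa [hH] at this
    have h0 : (lexProd G H).edist (g, h) (g, h') ≠ 0 := by
      rw [ne_eq, edist_eq_zero_iff]
      exact fun c => hne (congrArg Prod.snd c)
    have h1 : (lexProd G H).edist (g, h) (g, h') ≠ 1 := by
      rw [ne_eq, edist_eq_one_iff_adj]
      rintro (hg | ⟨-, hh⟩)
      · exact G.loopless.1 g hg
      · exact hadj hh
    lift (lexProd G H).edist (g, h) (g, h') to ℕ using (hle.trans_lt (ENat.coe_lt_top 2)).ne with t
    norm_cast at hle h0 h1 ⊢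
    omega

theorem lex_edist_cross {g g' : α} (hne : g ≠ g') (h h' : β) :
    (lexProd G H).edist (g, h) (g', h') = G.edist g g' := by
  refine le_antisymm ?_ (lex_edist_fst_le G H (g, h) (g', h'))
  rcases eq_or_ne (G.edist g g') ⊤ with ht | ht
  · rw [ht]; exact le_top
  · obtain ⟨p, hp⟩ := exists_walk_of_edist_ne_top ht
    cases p with
    | nil => exact absurd rfl hne
    | @cons _ x _ h1 q =>
      have hadj : (lexProd G H).Adj (g, h) (x, h') := Or.inl h1
      calc (lexProd G H).edist (g, h) (g', h')
          ≤ ((q.map (baseHom G H h')).cons hadj).length := edist_le _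
        _ = G.edist g g' := by
            rw [← hp]
            exact congrArg (fun n : ℕ => ((n + 1 : ℕ) : ℕ∞)) (SimpleGraph.Walk.length_map (baseHom G H h') q)

end LexDist
section UpperBound

variable {G : SimpleGraph α} {H : SimpleGraph β}

theorem lex_upper [Fintype α] [Fintype β]
    (hH2 : ∀ h h' : β, H.edist h h' ≤ 2) (hβ : Nonempty β)
    {C : Finset α} (hC : IsStrongGenerator G C) {S : Finset β} (hS : IsStrongGenerator H S) :
    ∃ T : Finset (α × β), IsStrongGenerator (lexProd G H) T ∧
      T.card = C.card * Fintype.card β + (Fintype.card α - C.card) * S.card := by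
  classical
  refine ⟨C ×ˢ Finset.univ ∪ (Finset.univ \ C) ×ˢ S, ?_, ?_⟩
  · rintro ⟨g, h⟩ ⟨g', h'⟩ hne
    by_cases hgg : g = g'
    · subst hgg
      have hhh : h ≠ h' := fun c => hne (by rw [c])
      obtain ⟨y, hyS, hres⟩ := hS h h' hhh
      refine ⟨(g, y), ?_, ?_⟩
      · by_cases hgC : g ∈ C
        · exact Finset.mem_union_left _ (Finset.mem_product.mpr ⟨hgC, Finset.mem_univ _⟩)
        · exact Finset.mem_union_right _ (Finset.mem_product.mpr
            ⟨Finset.mem_sdiff.mpr ⟨Finset.mem_univ _, hgC⟩, hyS⟩)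
      · unfold StronglyResolves at hres ⊢
        rw [lex_edist_fiber G H (hH2 y h) g, lex_edist_fiber G H (hH2 y h') g,
          lex_edist_fiber G H (hH2 h' h) g, lex_edist_fiber G H (hH2 h h') g]
        exact hres
    · obtain ⟨x, hxC, hres⟩ := hC g g' hgg
      by_cases hxg : x = g
      · subst hxg
        exact ⟨(x, h), Finset.mem_union_left _
          (Finset.mem_product.mpr ⟨hxC, Finset.mem_univ _⟩), sr_self_left _ _ _⟩
      by_cases hxg' : x = g'
      · subst hxg'
        exact ⟨(x, h'), Finset.mem_union_left _
          (Finset.mem_product.mpr ⟨hxC, Finset.mem_univ _⟩), sr_self_right _ _ _⟩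
      · obtain ⟨y0⟩ := hβ
        refine ⟨(x, y0), Finset.mem_union_left _
          (Finset.mem_product.mpr ⟨hxC, Finset.mem_univ _⟩), ?_⟩
        unfold StronglyResolves at hres ⊢
        rw [lex_edist_cross G H hxg y0 h, lex_edist_cross G H hxg' y0 h',
          lex_edist_cross G H (Ne.symm hgg) h' h, lex_edist_cross G H hgg h h']
        exact hres
  · have hdisj : Disjoint (C ×ˢ (Finset.univ : Finset β)) ((Finset.univ \ C) ×ˢ S) := by
      rw [Finset.disjoint_left]
      intro p hp hp'
      exact (Finset.mem_sdiff.mp (Finset.mem_product.mp hp').1).2 (Finset.mem_product.mp hp).1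
    rw [Finset.card_union_of_disjoint hdisj, Finset.card_product, Finset.card_product,
      Finset.card_sdiff_of_subset (Finset.subset_univ C), Finset.card_univ, Finset.card_univ]

end UpperBound
section LowerBound

variable {G : SimpleGraph α} {H : SimpleGraph β}

theorem lex_lower [Fintype α] [Fintype β]
    (hGfin : ∀ u v : α, G.edist u v ≠ ⊤)
    (htw : ∀ u v : α, TrueTwins G u v → u = v)
    (hH2 : ∀ h h' : β, H.edist h h' ≤ 2)
    {T : Finset (α × β)} (hT : IsStrongGenerator (lexProd G H) T) :
    sdim G * Fintype.card β + (Fintype.card α - sdim G) * sdim H ≤ T.card := by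
  classical
  have hHfin : ∀ h h' : β, H.edist h h' ≠ ⊤ :=
    fun h h' => ((hH2 h h').trans_lt (ENat.coe_lt_top 2)).ne
  set Sg : α → Finset β := fun g => (T.filter (fun p => p.1 = g)).image Prod.snd with hSgdef
  have hmem : ∀ g y, y ∈ Sg g ↔ (g, y) ∈ T := by
    intro g y
    simp only [hSgdef, Finset.mem_image, Finset.mem_filter]
    constructor
    · rintro ⟨⟨x, y'⟩, ⟨hp, hx⟩, hy⟩
      simp only at hx hy
      subst hx; subst hy; exact hp
    · intro hp; exact ⟨(g, y), ⟨hp, rfl⟩, rfl⟩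
  -- each fiber is a strong generator of H
  have hSgGen : ∀ g, IsStrongGenerator H (Sg g) := by
    intro g h h' hhh
    obtain ⟨⟨x, y⟩, hwT, hres⟩ := hT (g, h) (g, h') (fun c => hhh (congrArg Prod.snd c))
    have hx : x = g := by
      by_contra hx
      unfold StronglyResolves at hres
      rw [lex_edist_cross G H hx y h, lex_edist_cross G H hx y h',
        lex_edist_fiber G H (hH2 h' h) g, lex_edist_fiber G H (hH2 h h') g] at hres
      have h0 : H.edist h' h ≠ 0 := by
        rw [ne_eq, edist_eq_zero_iff]; exact fun c => hhh c.symm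
      have h0' : H.edist h h' ≠ 0 := by rw [ne_eq, edist_eq_zero_iff]; exact hhh
      lift G.edist x g to ℕ using hGfin x g with t
      lift H.edist h' h to ℕ using hHfin h' h with e1
      lift H.edist h h' to ℕ using hHfin h h' with e2
      norm_cast at hres h0 h0'
      omega
    subst hx
    refine ⟨y, (hmem x y).mpr hwT, ?_⟩
    unfold StronglyResolves at hres ⊢
    rw [lex_edist_fiber G H (hH2 y h) x, lex_edist_fiber G H (hH2 y h') x,
      lex_edist_fiber G H (hH2 h' h) x, lex_edist_fiber G H (hH2 h h') x] at hres
    exact hres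
  set F : Finset α := Finset.univ.filter (fun g => ∀ y, y ∈ Sg g) with hFdef
  -- F covers all MMD pairs of G
  have hFcov : ∀ g g' : α, g ≠ g' → MMD G g g' → g ∈ F ∨ g' ∈ F := by
    intro g g' hgg hmmd
    by_contra hc
    push_neg at hc
    obtain ⟨hgF, hg'F⟩ := hc
    have hg : ∃ h, h ∉ Sg g := by
      by_contra hall; push_neg at hall
      exact hgF (by simp only [hFdef, Finset.mem_filter, Finset.mem_univ, true_and]; exact hall)
    have hg' : ∃ h', h' ∉ Sg g' := by
      by_contra hall; push_neg at hall
      exact hg'F (by simp only [hFdef, Finset.mem_filter, Finset.mem_univ, true_and]; exact hall)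
    obtain ⟨h, hh⟩ := hg
    obtain ⟨h', hh'⟩ := hg'
    obtain ⟨⟨x, y⟩, hwT, hres⟩ := hT (g, h) (g', h') (fun c => hgg (congrArg Prod.fst c))
    have hne0 : G.edist g g' ≠ 0 := by rw [ne_eq, edist_eq_zero_iff]; exact hgg
    by_cases hxg : x = g
    · subst hxg
      unfold StronglyResolves at hres
      rw [lex_edist_fiber G H (hH2 y h) x, lex_edist_cross G H hgg y h',
        lex_edist_cross G H (Ne.symm hgg) h' h, lex_edist_cross G H hgg h h',
        G.edist_comm (u := g') (v := x)] at hres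
      rcases hres with h1 | h2
      · -- forces adjacency, contradicting MMD via twin-freeness
        have hadj : G.Adj x g' := by
          rw [← edist_eq_one_iff_adj]
          have hle := hH2 y h
          rw [h1] at hle
          lift G.edist x g' to ℕ using hGfin x g' with t
          norm_cast at hle hne0 ⊢
          omega
        obtain ⟨x0, hx0g, hx0g', hres0⟩ := adj_ext_resolver hGfin htw hadj
        exact mmd_no_ext hGfin hmmd hx0g hx0g' hres0
      · have hy : y = h := by
          rw [← edist_eq_zero_iff (G := H)]
          lift G.edist x g' to ℕ using hGfin x g' with t
          lift H.edist y h to ℕ using hHfin y h with e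
          norm_cast at h2 ⊢
          omega
        subst hy
        exact hh ((hmem x y).mpr hwT)
    by_cases hxg' : x = g'
    · subst hxg'
      unfold StronglyResolves at hres
      rw [lex_edist_cross G H (Ne.symm hgg) y h, lex_edist_fiber G H (hH2 y h') x,
        lex_edist_cross G H (Ne.symm hgg) h' h, lex_edist_cross G H hgg h h',
        G.edist_comm (u := x) (v := g)] at hres
      rcases hres with h1 | h2
      · have hy : y = h' := by
          rw [← edist_eq_zero_iff (G := H)]
          lift G.edist g x to ℕ using hGfin g x with t
          lift H.edist y h' to ℕ using hHfin y h' with e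
          norm_cast at h1 ⊢
          omega
        subst hy
        exact hh' ((hmem x y).mpr hwT)
      · have hadj : G.Adj g x := by
          rw [← edist_eq_one_iff_adj]
          have hle := hH2 y h'
          rw [h2] at hle
          have hne0' : G.edist g x ≠ 0 := by rw [ne_eq, edist_eq_zero_iff]; exact hgg
          lift G.edist g x to ℕ using hGfin g x with t
          norm_cast at hle hne0' ⊢
          omega
        obtain ⟨x0, hx0g, hx0g', hres0⟩ := adj_ext_resolver hGfin htw hadj
        exact mmd_no_ext hGfin hmmd hx0g hx0g' hres0
    · unfold StronglyResolves at hres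
      rw [lex_edist_cross G H hxg y h, lex_edist_cross G H hxg' y h',
        lex_edist_cross G H (Ne.symm hgg) h' h, lex_edist_cross G H hgg h h'] at hres
      exact mmd_no_ext hGfin hmmd hxg hxg' hres
  have hFgen : IsStrongGenerator G F := cover_isStrongGenerator hGfin F hFcov
  have haF : sdim G ≤ F.card := sdim_le_card hFgen
  -- counting
  have hcount : T.card = ∑ g : α, (Sg g).card := by
    rw [Finset.card_eq_sum_card_fiberwise (f := Prod.fst) (t := Finset.univ)
      (fun x _ => Finset.mem_univ _)]
    refine Finset.sum_congr rfl fun g _ => ?_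
    rw [hSgdef]
    refine (Finset.card_image_of_injOn ?_).symm
    rintro ⟨x1, y1⟩ hp1 ⟨x2, y2⟩ hp2 hy
    simp only [Finset.coe_filter, Set.mem_setOf_eq] at hp1 hp2
    simp only at hy
    rw [Prod.mk.injEq]
    exact ⟨hp1.2.trans hp2.2.symm, hy⟩
  have hbound : ∀ g : α, (if g ∈ F then Fintype.card β else sdim H) ≤ (Sg g).card := by
    intro g
    by_cases hg : g ∈ F
    · simp only [hg, if_true]
      have : Sg g = Finset.univ := by
        apply Finset.eq_univ_iff_forall.mpr
        simpa only [hFdef, Finset.mem_filter, Finset.mem_univ, true_and] using hg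
      rw [this, Finset.card_univ]
    · simp only [hg, if_false]
      exact sdim_le_card (hSgGen g)
  have hsum : ∑ g : α, (if g ∈ F then Fintype.card β else sdim H) ≤ ∑ g : α, (Sg g).card :=
    Finset.sum_le_sum (fun g _ => hbound g)
  have hsumval : ∑ g : α, (if g ∈ F then Fintype.card β else sdim H)
      = F.card * Fintype.card β + (Fintype.card α - F.card) * sdim H := by
    rw [Finset.sum_ite, Finset.sum_const, Finset.sum_const, smul_eq_mul, smul_eq_mul]
    congr 1
    · congr 1
      congr 1
      ext g
      simp
    · congr 1
      have : Finset.univ.filter (fun g => ¬ g ∈ F) = Finset.univ \ F := by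
        ext g; simp
      rw [this, Finset.card_sdiff_of_subset (Finset.subset_univ F), Finset.card_univ]
  -- final arithmetic
  have hfn : F.card ≤ Fintype.card α := Finset.card_le_univ F
  have hbn' : sdim H ≤ Fintype.card β := sdim_le_fintype_card H
  obtain ⟨k, hk⟩ := Nat.exists_eq_add_of_le haF
  obtain ⟨m, hm⟩ := Nat.exists_eq_add_of_le hfn
  have hmono : sdim G * Fintype.card β + (Fintype.card α - sdim G) * sdim H
      ≤ F.card * Fintype.card β + (Fintype.card α - F.card) * sdim H := by
    rw [hm, hk]
    have h1 : k * sdim H ≤ k * Fintype.card β := Nat.mul_le_mul_left k hbn'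
    have e1 : sdim G + k + m - sdim G = k + m := by omega
    have e2 : sdim G + k + m - (sdim G + k) = m := by omega
    rw [e1, e2]
    nlinarith
  calc sdim G * Fintype.card β + (Fintype.card α - sdim G) * sdim H
      ≤ F.card * Fintype.card β + (Fintype.card α - F.card) * sdim H := hmono
    _ = ∑ g : α, (if g ∈ F then Fintype.card β else sdim H) := hsumval.symm
    _ ≤ ∑ g : α, (Sg g).card := hsum
    _ = T.card := hcount.symm

end LowerBound
theorem stmt_15 [Fintype α] [Fintype β] (G : SimpleGraph α) (H : SimpleGraph β)
    (hG : G.Connected) (hn : 2 ≤ Fintype.card α)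
    (htw : ∀ u v : α, TrueTwins G u v → u = v)
    (hn' : 2 ≤ Fintype.card β) (hdiam : H.ediam ≤ 2) :
    sdim (lexProd G H) =
      Fintype.card α * sdim H + Fintype.card β * sdim G - sdim G * sdim H := by
  classical
  have hβ : Nonempty β := Fintype.card_pos_iff.mp (by omega)
  have hGfin : ∀ u v : α, G.edist u v ≠ ⊤ :=
    fun u v => edist_ne_top_iff_reachable.mpr (hG.preconnected u v)
  have hH2 : ∀ h h' : β, H.edist h h' ≤ 2 := fun h h' => le_trans edist_le_ediam hdiam
  obtain ⟨C, hC, hCcard⟩ := exists_min_generator G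
  obtain ⟨S, hS, hScard⟩ := exists_min_generator H
  obtain ⟨T, hTgen, hTcard⟩ := lex_upper hH2 hβ hC hS
  have hub : sdim (lexProd G H)
      ≤ sdim G * Fintype.card β + (Fintype.card α - sdim G) * sdim H := by
    have h := sdim_le_card hTgen
    rw [hTcard, hCcard, hScard] at h
    exact h
  obtain ⟨T0, hT0gen, hT0card⟩ := exists_min_generator (lexProd G H)
  have hlb : sdim G * Fintype.card β + (Fintype.card α - sdim G) * sdim H
      ≤ sdim (lexProd G H) := by
    have h := lex_lower hGfin htw hH2 hT0gen
    rwa [hT0card] at h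
  rw [le_antisymm hub hlb]
  have ha : sdim G ≤ Fintype.card α := sdim_le_fintype_card G
  have hb : sdim H ≤ Fintype.card β := sdim_le_fintype_card H
  obtain ⟨c, hc⟩ := Nat.exists_eq_add_of_le ha
  obtain ⟨d, hd⟩ := Nat.exists_eq_add_of_le hb
  rw [hc, hd]
  have e1 : sdim G + c - sdim G = c := by omega
  rw [e1]
  have h2 : (sdim G + c) * sdim H + (sdim H + d) * sdim G
      = sdim G * sdim H + (sdim G * (sdim H + d) + c * sdim H) := by ring
  rw [h2, Nat.add_sub_cancel_left]

end Paper
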